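/- Primal optimum from the dual minimizer: in the setting of the KL-regularized occupancy optimization (finite S and A, transition kernel P, initial distribution ρ₀, discount 0 < γ < 1, reward R : S × A → ℝ, reference distribution d_O > 0, strict feasibility of the Bellman flow constraint set F), suppose V* : S → ℝ attains the infimum of the dual objective V ↦ (1−γ)·Σ_s ρ₀(s)·V(s) + log( Σ_{(s,a)} d_O(s,a)·exp(δ_V(s,a)) ), where δ_V(s,a) = R(s,a) + γ·Σ_{s'} P(s'|s,a)·V(s') − V(s). Define d*(s,a) = d_O(s,a)·exp(δ_{V*}(s,a)) / Σ_{(s',a')} d_O(s',a')·exp(δ_{V*}(s',a')). Then d* satisfies the Bellman flow constraints (d* ∈ F) and Σ_{(s,a)} d*(s,a)·R(s,a) − D_KL(d* ‖ d_O) equals the dual objective value at V*; consequently d* attains the primal supremum. -/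

import Mathlib

open Real Finset

/-- Gibbs / Jensen inequality for log. -/
lemma gibbs_aux {ι : Type*} [Fintype ι] [Nonempty ι] (d w : ι → ℝ)
    (hd : ∀ i, 0 ≤ d i) (hw : ∀ i, 0 < w i) (hd1 : ∑ i, d i = 1) :
    ∑ i, d i * Real.log (w i / d i) ≤ Real.log (∑ i, w i) := by
  have hZ : 0 < ∑ i, w i := Finset.sum_pos (fun i _ => hw i) univ_nonempty
  set Z := ∑ i, w i with hZdef
  have key : ∀ i, d i * Real.log (w i / d i) ≤ w i / Z - d i + d i * Real.log Z := by
    intro i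
    rcases eq_or_lt_of_le (hd i) with h0 | h0
    · rw [← h0]; simp
      exact le_of_lt (div_pos (hw i) hZ)
    · have h1 : Real.log (w i / (Z * d i)) ≤ w i / (Z * d i) - 1 :=
        Real.log_le_sub_one_of_pos (div_pos (hw i) (mul_pos hZ h0))
      have h2 : Real.log (w i / d i) = Real.log (w i / (Z * d i)) + Real.log Z := by
        rw [← Real.log_mul (ne_of_gt (div_pos (hw i) (mul_pos hZ h0))) (ne_of_gt hZ)]
        congr 1
        field_simp
      rw [h2]
      have h3 := mul_le_mul_of_nonneg_left h1 (le_of_lt h0)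
      have h4 : d i * (w i / (Z * d i) - 1) = w i / Z - d i := by
        field_simp
      nlinarith
  calc ∑ i, d i * Real.log (w i / d i) ≤ ∑ i, (w i / Z - d i + d i * Real.log Z) :=
        Finset.sum_le_sum (fun i _ => key i)
    _ = (∑ i, w i) / Z - (∑ i, d i) + (∑ i, d i) * Real.log Z := by
        rw [Finset.sum_add_distrib, Finset.sum_sub_distrib, ← Finset.sum_div, ← Finset.sum_mul]
    _ = Real.log Z := by rw [hd1, ← hZdef]; field_simp; ring

lemma lse_deriv {ι : Type*} [Fintype ι] [Nonempty ι] (w c : ι → ℝ) (hw : ∀ i, 0 < w i) :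
    HasDerivAt (fun t => Real.log (∑ i, w i * Real.exp (t * c i)))
      ((∑ i, w i * c i) / (∑ i, w i)) 0 := by
  have hZ : 0 < ∑ i, w i := Finset.sum_pos (fun i _ => hw i) univ_nonempty
  have hsum : HasDerivAt (fun t => ∑ i, w i * Real.exp (t * c i)) (∑ i, w i * c i) 0 := by
    apply HasDerivAt.fun_sum
    intro i _
    have h := ((hasDerivAt_mul_const (x := (0:ℝ)) (c i)).exp).const_mul (w i)
    simpa using h
  have hval : (∑ i, w i * Real.exp ((0:ℝ) * c i)) = ∑ i, w i := by simp
  have h := hsum.log (by simpa [hval] using ne_of_gt hZ)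
  simpa [hval] using h

/-- First-order condition at a minimizer of a tilted log-sum-exp. -/
lemma foc_aux {ι : Type*} [Fintype ι] [Nonempty ι] (b : ℝ) (w c : ι → ℝ) (hw : ∀ i, 0 < w i)
    (hmin : ∀ t : ℝ, Real.log (∑ i, w i)
        ≤ t * b + Real.log (∑ i, w i * Real.exp (t * c i))) :
    b + (∑ i, w i * c i) / (∑ i, w i) = 0 := by
  have hf : HasDerivAt (fun t => t * b + Real.log (∑ i, w i * Real.exp (t * c i)))
      (b + (∑ i, w i * c i) / (∑ i, w i)) 0 :=
    (hasDerivAt_mul_const b).add (lse_deriv w c hw)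
  have hmin' : IsLocalMin (fun t => t * b + Real.log (∑ i, w i * Real.exp (t * c i))) 0 := by
    apply Filter.Eventually.of_forall
    intro t
    simpa using hmin t
  exact hmin'.hasDerivAt_eq_zero hf

lemma flow_sum_one {S A : Type*} [Fintype S] [Fintype A]
    (P : S × A → S → ℝ) (hP1 : ∀ p : S × A, ∑ s' : S, P p s' = 1)
    (ρ₀ : S → ℝ) (hρ1 : ∑ s : S, ρ₀ s = 1) (γ : ℝ) (hγ1 : γ < 1)
    (d : S × A → ℝ)
    (hd : ∀ s : S, ∑ a : A, d (s, a)
        = (1 - γ) * ρ₀ s + γ * ∑ p : S × A, P p s * d p) :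
    ∑ p : S × A, d p = 1 := by
  have h1 : ∑ p : S × A, d p = ∑ s : S, ∑ a : A, d (s, a) :=
    Fintype.sum_prod_type (f := fun p => d p)
  have h2 : ∑ s : S, ∑ p : S × A, P p s * d p = ∑ p : S × A, d p := by
    rw [Finset.sum_comm]
    simp_rw [← Finset.sum_mul, hP1, one_mul]
  have h3 : ∑ p : S × A, d p = (1 - γ) + γ * ∑ p : S × A, d p := by
    conv_lhs => rw [h1, Finset.sum_congr rfl (fun s _ => hd s)]
    rw [Finset.sum_add_distrib, ← Finset.mul_sum, hρ1, ← Finset.mul_sum, h2]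
    ring
  have h4 : (1 - γ) * (∑ p : S × A, d p) = (1 - γ) * 1 := by linarith
  exact mul_left_cancel₀ (by linarith) h4

lemma flow_value {S A : Type*} [Fintype S] [Fintype A]
    (P : S × A → S → ℝ) (ρ₀ : S → ℝ) (γ : ℝ)
    (d : S × A → ℝ)
    (hd : ∀ s : S, ∑ a : A, d (s, a)
        = (1 - γ) * ρ₀ s + γ * ∑ p : S × A, P p s * d p)
    (V : S → ℝ) :
    ∑ p : S × A, d p * (V p.1 - γ * ∑ s' : S, P p s' * V s')
      = (1 - γ) * ∑ s : S, ρ₀ s * V s := by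
  have h1 : ∑ p : S × A, d p * V p.1 = ∑ s : S, V s * ∑ a : A, d (s, a) := by
    rw [Fintype.sum_prod_type (f := fun p => d p * V p.1)]
    congr 1; ext s
    rw [Finset.mul_sum]
    congr 1; ext a
    ring
  have h2 : ∑ p : S × A, d p * (γ * ∑ s' : S, P p s' * V s')
      = γ * ∑ s : S, V s * ∑ p : S × A, P p s * d p := by
    have e1 : ∀ p : S × A, d p * (γ * ∑ s' : S, P p s' * V s')
        = ∑ s' : S, γ * (V s' * (P p s' * d p)) := by
      intro p
      rw [Finset.mul_sum, Finset.mul_sum]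
      congr 1; ext s'
      ring
    rw [Finset.sum_congr rfl (fun p _ => e1 p), Finset.sum_comm, Finset.mul_sum]
    refine Finset.sum_congr rfl (fun s _ => ?_)
    rw [Finset.mul_sum, Finset.mul_sum]
  have e2 : ∀ p : S × A, d p * (V p.1 - γ * ∑ s' : S, P p s' * V s')
      = d p * V p.1 - d p * (γ * ∑ s' : S, P p s' * V s') := fun p => by ring
  rw [Finset.sum_congr rfl (fun p _ => e2 p), Finset.sum_sub_distrib, h1, h2,
    Finset.mul_sum, ← Finset.sum_sub_distrib, Finset.mul_sum]
  congr 1; ext s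
  rw [hd s]
  ring

/-- Primal optimum from the dual minimizer: if `V*` minimizes the log-sum-exp dual
objective, then the softmax occupancy `d*(s,a) ∝ d_O(s,a) exp(δ_{V*}(s,a))` is
flow-feasible, its KL-regularized expected reward equals the dual value at `V*`,
and `d*` attains the primal supremum. -/
theorem primal_optimum_from_dual_minimizer
    {S A : Type*} [Fintype S] [Fintype A] [Nonempty S] [Nonempty A]
    (P : S × A → S → ℝ) (hP0 : ∀ p s', 0 ≤ P p s') (hP1 : ∀ p : S × A, ∑ s' : S, P p s' = 1)
    (ρ₀ : S → ℝ) (hρ0 : ∀ s, 0 ≤ ρ₀ s) (hρ1 : ∑ s : S, ρ₀ s = 1)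
    (γ : ℝ) (hγ0 : 0 < γ) (hγ1 : γ < 1)
    (R : S × A → ℝ)
    (dO : S × A → ℝ) (hO0 : ∀ p, 0 < dO p) (hO1 : ∑ p : S × A, dO p = 1)
    (hfeas : ∃ d : S × A → ℝ, (∀ p, 0 < d p) ∧
      (∀ s : S, ∑ a : A, d (s, a)
          = (1 - γ) * ρ₀ s + γ * ∑ p : S × A, P p s * d p))
    -- the dual objective, with TD error `δ_V(s,a) = R(s,a) + γ ⟨P(·|s,a), V⟩ − V(s)`
    (dual : (S → ℝ) → ℝ)
    (hdual : ∀ V : S → ℝ,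
      dual V = (1 - γ) * (∑ s : S, ρ₀ s * V s)
          + Real.log (∑ p : S × A, dO p *
              Real.exp (R p + γ * (∑ s' : S, P p s' * V s') - V p.1)))
    -- `V*` attains the infimum of the dual objective
    (Vstar : S → ℝ) (hVstar : ∀ V : S → ℝ, dual Vstar ≤ dual V)
    -- the softmax-tilted occupancy induced by `V*`
    (dstar : S × A → ℝ)
    (hdstar : ∀ p : S × A,
      dstar p = dO p * Real.exp (R p + γ * (∑ s' : S, P p s' * Vstar s') - Vstar p.1)
        / ∑ p' : S × A, dO p' *
            Real.exp (R p' + γ * (∑ s' : S, P p' s' * Vstar s') - Vstar p'.1)) :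
    ((∀ p, 0 ≤ dstar p) ∧
      (∀ s : S, ∑ a : A, dstar (s, a)
          = (1 - γ) * ρ₀ s + γ * ∑ p : S × A, P p s * dstar p)) ∧
    ((∑ p : S × A, dstar p * R p) - (∑ p : S × A, dstar p * Real.log (dstar p / dO p))
        = dual Vstar) ∧
    (∀ d : S × A → ℝ, (∀ p, 0 ≤ d p) →
      (∀ s : S, ∑ a : A, d (s, a)
          = (1 - γ) * ρ₀ s + γ * ∑ p : S × A, P p s * d p) →
      (∑ p : S × A, d p * R p) - (∑ p : S × A, d p * Real.log (d p / dO p))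
        ≤ (∑ p : S × A, dstar p * R p)
            - ∑ p : S × A, dstar p * Real.log (dstar p / dO p)) := by
  classical
  -- abbreviations
  have hwdef : True := trivial
  set w : S × A → ℝ :=
    fun p => dO p * Real.exp (R p + γ * (∑ s' : S, P p s' * Vstar s') - Vstar p.1) with hw
  have hwpos : ∀ p : S × A, 0 < w p := fun p => mul_pos (hO0 p) (Real.exp_pos _)
  have hZpos : 0 < ∑ p : S × A, w p := Finset.sum_pos (fun p _ => hwpos p) univ_nonempty
  have hds : ∀ p : S × A, dstar p = w p / ∑ p' : S × A, w p' := hdstar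
  have hdpos : ∀ p, 0 < dstar p := fun p => by
    rw [hds p]; exact div_pos (hwpos p) hZpos
  have hd0 : ∀ p, 0 ≤ dstar p := fun p => (hdpos p).le
  -- the dual value in terms of w
  have hdual' : dual Vstar
      = (1 - γ) * (∑ s : S, ρ₀ s * Vstar s) + Real.log (∑ p : S × A, w p) := hdual Vstar
  -- flow feasibility of dstar via first-order conditions
  have hflow : ∀ s : S, ∑ a : A, dstar (s, a)
      = (1 - γ) * ρ₀ s + γ * ∑ p : S × A, P p s * dstar p := by
    intro s
    set c : S × A → ℝ := fun p => γ * P p s - (if p.1 = s then 1 else 0) with hc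
    have hfoc : (1 - γ) * ρ₀ s + (∑ p : S × A, w p * c p) / (∑ p : S × A, w p) = 0 := by
      apply foc_aux ((1 - γ) * ρ₀ s) w c hwpos
      intro t
      have hVt := hVstar (fun s' => Vstar s' + t * (if s' = s then 1 else 0))
      rw [hdual', hdual] at hVt
      have hlin : (∑ s' : S, ρ₀ s' * (Vstar s' + t * (if s' = s then 1 else 0)))
          = (∑ s' : S, ρ₀ s' * Vstar s') + t * ρ₀ s := by
        simp_rw [mul_add]
        rw [Finset.sum_add_distrib]
        congr 1
        simp [mul_ite, mul_comm, mul_left_comm]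
      have hexp : ∀ p : S × A,
          dO p * Real.exp (R p + γ * (∑ s' : S, P p s' * (Vstar s' + t * (if s' = s then 1 else 0)))
              - (Vstar p.1 + t * (if p.1 = s then 1 else 0)))
          = w p * Real.exp (t * c p) := by
        intro p
        have hPsum : (∑ s' : S, P p s' * (Vstar s' + t * (if s' = s then 1 else 0)))
            = (∑ s' : S, P p s' * Vstar s') + t * P p s := by
          simp_rw [mul_add]
          rw [Finset.sum_add_distrib]
          congr 1
          simp [mul_ite, mul_comm, mul_left_comm]
        rw [hPsum]
        show dO p * Real.exp (R p + γ * ((∑ s' : S, P p s' * Vstar s') + t * P p s)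
              - (Vstar p.1 + t * (if p.1 = s then 1 else 0)))
            = dO p * Real.exp (R p + γ * (∑ s' : S, P p s' * Vstar s') - Vstar p.1)
              * Real.exp (t * (γ * P p s - (if p.1 = s then 1 else 0)))
        rw [mul_assoc, ← Real.exp_add]
        congr 2
        ring
      rw [hlin] at hVt
      calc Real.log (∑ p : S × A, w p)
          ≤ t * ((1 - γ) * ρ₀ s) + ((1 - γ) * t * ρ₀ s - t * ((1 - γ) * ρ₀ s))
            + Real.log (∑ p : S × A, w p * Real.exp (t * c p)) := by
            have := hVt
            rw [Finset.sum_congr rfl (fun p _ => hexp p)] at this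
            nlinarith [this]
        _ = t * ((1 - γ) * ρ₀ s) + Real.log (∑ p : S × A, w p * Real.exp (t * c p)) := by ring
    -- unfold the first-order condition
    have hsplit : ∑ p : S × A, w p * c p
        = γ * (∑ p : S × A, P p s * w p) - ∑ a : A, w (s, a) := by
      rw [hc]
      have e : ∀ p : S × A, w p * (γ * P p s - (if p.1 = s then 1 else 0))
          = γ * (P p s * w p) - (if p.1 = s then w p else 0) := by
        intro p
        split <;> ring
      rw [Finset.sum_congr rfl (fun p _ => e p), Finset.sum_sub_distrib, ← Finset.mul_sum]
      congr 1
      rw [Fintype.sum_prod_type (f := fun p : S × A => if p.1 = s then w p else 0)]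
      have e2 : ∀ x : S, (∑ a : A, if x = s then w (x, a) else 0)
          = if x = s then (∑ a : A, w (x, a)) else 0 := by
        intro x; split <;> simp
      rw [Finset.sum_congr rfl (fun x _ => e2 x),
        Finset.sum_ite_eq' univ s (fun x => ∑ a : A, w (x, a))]
      simp
    have hdZ : ∀ p : S × A, dstar p * (∑ p' : S × A, w p') = w p := by
      intro p
      rw [hds p, div_mul_cancel₀ _ (ne_of_gt hZpos)]
    have key : (∑ a : A, w (s, a)) / (∑ p' : S × A, w p')
        = (1 - γ) * ρ₀ s + γ * ((∑ p : S × A, P p s * w p) / (∑ p' : S × A, w p')) := by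
      rw [hsplit] at hfoc
      field_simp at hfoc ⊢
      linarith
    calc ∑ a : A, dstar (s, a)
        = (∑ a : A, w (s, a)) / (∑ p' : S × A, w p') := by
          rw [Finset.sum_div]
          exact Finset.sum_congr rfl (fun a _ => hds (s, a))
      _ = (1 - γ) * ρ₀ s + γ * ((∑ p : S × A, P p s * w p) / (∑ p' : S × A, w p')) := key
      _ = (1 - γ) * ρ₀ s + γ * ∑ p : S × A, P p s * dstar p := by
          congr 1
          rw [Finset.sum_div, Finset.mul_sum, ← Finset.mul_sum]
          congr 1
          refine Finset.sum_congr rfl (fun p _ => ?_)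
          rw [hds p]
          ring
  have hdsum1 : ∑ p : S × A, dstar p = 1 := flow_sum_one P hP1 ρ₀ hρ1 γ hγ1 dstar hflow
  have hlog : ∀ p : S × A, Real.log (dstar p / dO p)
      = (R p + γ * (∑ s' : S, P p s' * Vstar s') - Vstar p.1)
        - Real.log (∑ p' : S × A, w p') := by
    intro p
    have e1 : dstar p / dO p
        = Real.exp (R p + γ * (∑ s' : S, P p s' * Vstar s') - Vstar p.1)
          / (∑ p' : S × A, w p') := by
      rw [hds p]
      show (dO p * Real.exp (R p + γ * (∑ s' : S, P p s' * Vstar s') - Vstar p.1))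
          / (∑ p' : S × A, w p') / dO p = _
      rw [div_div, mul_comm _ (dO p), mul_div_mul_left _ _ (hO0 p).ne']
    rw [e1, Real.log_div (Real.exp_pos _).ne' hZpos.ne', Real.log_exp]
  have key2 : (∑ p : S × A, dstar p * R p)
      - (∑ p : S × A, dstar p * Real.log (dstar p / dO p)) = dual Vstar := by
    have e3 : ∀ p : S × A, dstar p * R p - dstar p * Real.log (dstar p / dO p)
        = dstar p * (Vstar p.1 - γ * ∑ s' : S, P p s' * Vstar s')
          + dstar p * Real.log (∑ p' : S × A, w p') := by
      intro p
      rw [hlog p]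
      ring
    rw [← Finset.sum_sub_distrib, Finset.sum_congr rfl (fun p _ => e3 p),
      Finset.sum_add_distrib, flow_value P ρ₀ γ dstar hflow Vstar,
      ← Finset.sum_mul, hdsum1, one_mul, hdual']
  refine ⟨⟨hd0, hflow⟩, key2, ?_⟩
  intro d hd0' hdflow
  have hdsum : ∑ p : S × A, d p = 1 := flow_sum_one P hP1 ρ₀ hρ1 γ hγ1 d hdflow
  have e4 : ∀ p : S × A, d p * R p - d p * Real.log (d p / dO p)
      = d p * (Vstar p.1 - γ * ∑ s' : S, P p s' * Vstar s')
        + d p * Real.log (w p / d p) := by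
    intro p
    rcases eq_or_lt_of_le (hd0' p) with h0 | h0
    · rw [← h0]; ring
    · have e5 : Real.log (w p / d p)
          = (R p + γ * (∑ s' : S, P p s' * Vstar s') - Vstar p.1)
            - Real.log (d p / dO p) := by
        show Real.log ((dO p * Real.exp (R p + γ * (∑ s' : S, P p s' * Vstar s') - Vstar p.1))
            / d p) = _
        rw [Real.log_div (mul_pos (hO0 p) (Real.exp_pos _)).ne' h0.ne',
          Real.log_mul (hO0 p).ne' (Real.exp_pos _).ne', Real.log_exp,
          Real.log_div h0.ne' (hO0 p).ne']
        ring
      rw [e5]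
      ring
  calc (∑ p : S × A, d p * R p) - (∑ p : S × A, d p * Real.log (d p / dO p))
      = (∑ p : S × A, d p * (Vstar p.1 - γ * ∑ s' : S, P p s' * Vstar s'))
        + ∑ p : S × A, d p * Real.log (w p / d p) := by
        rw [← Finset.sum_sub_distrib, Finset.sum_congr rfl (fun p _ => e4 p),
          Finset.sum_add_distrib]
    _ ≤ (1 - γ) * (∑ s : S, ρ₀ s * Vstar s) + Real.log (∑ p' : S × A, w p') := by
        rw [flow_value P ρ₀ γ d hdflow Vstar]
        exact add_le_add_right (gibbs_aux d w hd0' hwpos hdsum) _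
    _ = dual Vstar := hdual'.symm
    _ = (∑ p : S × A, dstar p * R p)
        - ∑ p : S × A, dstar p * Real.log (dstar p / dO p) := key2.symm
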